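/- For β>6, the equation 2q((β−q)/6)^{1/3} = 3β − q has at least two distinct roots q ∈ (0, β) if and only if β > (3/2)(26+15√3), except possibly at β = (3/2)(26+15√3) itself. -/
import Mathlib

open Real Set

lemma cube_cubeRoot {x : ℝ} (hx : 0 ≤ x) : (x ^ ((1:ℝ)/3)) ^ 3 = x := by
  rw [← Real.rpow_natCast (x ^ ((1:ℝ)/3)) 3, ← Real.rpow_mul hx]
  norm_num

lemma cubeRoot_cube {u : ℝ} (hu : 0 ≤ u) : (u ^ 3) ^ ((1:ℝ)/3) = u := by
  rw [← Real.rpow_natCast u 3, ← Real.rpow_mul hu]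
  norm_num

set_option maxHeartbeats 1000000 in
/-- For `β > 6` (excluding `β = (3/2)(26+15√3)` itself), the
equation `2q((β−q)/6)^{1/3} = 3β − q` has at least two distinct roots
`q ∈ (0,β)` if and only if `β > (3/2)(26+15√3)`. -/
theorem stmt13 (β : ℝ) (hβ : 6 < β) (hne : β ≠ 3 / 2 * (26 + 15 * Real.sqrt 3)) :
    (∃ q₁ q₂ : ℝ, q₁ ∈ Ioo 0 β ∧ q₂ ∈ Ioo 0 β ∧ q₁ ≠ q₂ ∧
      2 * q₁ * ((β - q₁) / 6) ^ ((1:ℝ)/3) = 3 * β - q₁ ∧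
      2 * q₂ * ((β - q₂) / 6) ^ ((1:ℝ)/3) = 3 * β - q₂) ↔
    β > 3 / 2 * (26 + 15 * Real.sqrt 3) := by
  have hs2 : Real.sqrt 3 ^ 2 = 3 := Real.sq_sqrt (by norm_num)
  set s := Real.sqrt 3 with hsdef
  have hs0 : 0 ≤ s := Real.sqrt_nonneg 3
  have hs1 : 1 < s := by nlinarith
  constructor
  · rintro ⟨q, q', ⟨hq0, hqβ⟩, -, -, heq, -⟩
    set u := ((β - q) / 6) ^ ((1:ℝ)/3) with hudef
    have hx : (0:ℝ) < (β - q) / 6 := by linarith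
    have hu0 : 0 < u := Real.rpow_pos_of_pos hx _
    have hu3 : u ^ 3 = (β - q) / 6 := cube_cubeRoot hx.le
    have hq : q = β - 6 * u ^ 3 := by rw [hu3]; ring
    have heq' : 2 * (β - 6 * u ^ 3) * u = 3 * β - (β - 6 * u ^ 3) := by
      rw [← hq]; exact heq
    have key : β * (u - 1) = 6 * u ^ 4 + 3 * u ^ 3 := by linear_combination heq' / 2
    have hu1 : 1 < u := by nlinarith [pow_pos hu0 3, pow_pos hu0 4]
    have iden : (β - 3 / 2 * (26 + 15 * s)) * (u - 1) * 4 =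
        (2 * u - 1 - s) ^ 2 * (6 * u ^ 2 + (9 + 6 * s) * u + (21 + 12 * s)) := by
      linear_combination 4 * key + (18 * u ^ 2 + (27 - 6 * s) * u - 45 - 12 * s) * hs2
    have hQ : 0 < 6 * u ^ 2 + (9 + 6 * s) * u + (21 + 12 * s) := by nlinarith
    have hge : 3 / 2 * (26 + 15 * s) ≤ β := by
      nlinarith [mul_nonneg (sq_nonneg (2 * u - 1 - s)) hQ.le]
    exact lt_of_le_of_ne hge (Ne.symm hne)
  · intro hβ0
    have hcont : Continuous fun u : ℝ => β * (u - 1) - 6 * u ^ 4 - 3 * u ^ 3 := by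
      continuity
    have hstar1 : (1:ℝ) < (1 + s) / 2 := by linarith
    have hUx : (0:ℝ) < β / 6 := by linarith
    set U := (β / 6) ^ ((1:ℝ)/3) with hUdef
    have hU0 : 0 < U := Real.rpow_pos_of_pos hUx _
    have hU3 : U ^ 3 = β / 6 := cube_cubeRoot hUx.le
    have hUstar : (1 + s) / 2 < U := by
      by_contra h
      push_neg at h
      have h3 : U ^ 3 ≤ ((1 + s) / 2) ^ 3 := pow_le_pow_left₀ hU0.le h 3
      nlinarith
    have hgstar : 0 < β * ((1 + s) / 2 - 1) - 6 * ((1 + s) / 2) ^ 4 - 3 * ((1 + s) / 2) ^ 3 := by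
      nlinarith [mul_pos (sub_pos.2 hβ0) (show (0:ℝ) < (s - 1) / 2 by linarith)]
    have hgU : β * (U - 1) - 6 * U ^ 4 - 3 * U ^ 3 = -3 * β / 2 := by
      linear_combination (-6 * U - 3) * hU3
    obtain ⟨u₁, hu₁mem, hgu₁⟩ :=
      intermediate_value_Ioo hstar1.le hcont.continuousOn
        (show (0:ℝ) ∈ Ioo _ _ from ⟨by norm_num, hgstar⟩)
    obtain ⟨u₂, hu₂mem, hgu₂⟩ :=
      intermediate_value_Ioo' hUstar.le hcont.continuousOn
        (show (0:ℝ) ∈ Ioo _ _ from ⟨by rw [hgU]; linarith, hgstar⟩)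
    have hg₁ : β * (u₁ - 1) - 6 * u₁ ^ 4 - 3 * u₁ ^ 3 = 0 := hgu₁
    have hg₂ : β * (u₂ - 1) - 6 * u₂ ^ 4 - 3 * u₂ ^ 3 = 0 := hgu₂
    obtain ⟨hu₁l, hu₁r⟩ := hu₁mem
    obtain ⟨hu₂l, hu₂r⟩ := hu₂mem
    have hu₁0 : 0 < u₁ := by linarith
    have hu₂0 : 0 < u₂ := by linarith
    have hu₁U : u₁ < U := by linarith
    have hcube₁ : u₁ ^ 3 < β / 6 := by
      rw [← hU3]; exact pow_lt_pow_left₀ hu₁U hu₁0.le (by norm_num)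
    have hcube₂ : u₂ ^ 3 < β / 6 := by
      rw [← hU3]; exact pow_lt_pow_left₀ hu₂r hu₂0.le (by norm_num)
    have hcube₁pos : 0 < u₁ ^ 3 := pow_pos hu₁0 3
    have hcube₂pos : 0 < u₂ ^ 3 := pow_pos hu₂0 3
    have hlt : u₁ ^ 3 < u₂ ^ 3 :=
      pow_lt_pow_left₀ (by linarith : u₁ < u₂) hu₁0.le (by norm_num)
    refine ⟨β - 6 * u₁ ^ 3, β - 6 * u₂ ^ 3, ⟨by linarith, by linarith⟩,
      ⟨by linarith, by linarith⟩, by intro h; nlinarith, ?_, ?_⟩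
    · have e : (β - (β - 6 * u₁ ^ 3)) / 6 = u₁ ^ 3 := by ring
      rw [e, cubeRoot_cube hu₁0.le]
      linear_combination 2 * hg₁
    · have e : (β - (β - 6 * u₂ ^ 3)) / 6 = u₂ ^ 3 := by ring
      rw [e, cubeRoot_cube hu₂0.le]
      linear_combination 2 * hg₂
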